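/- Let A be the 4-dimensional commutative ℂ-algebra with basis e₁, e₂, e₃, e₄ and nonzero products e₁e₁ = e₂ and e₂e₃ = e₃e₂ = e₄ (all other products of basis vectors are zero). Then a ℂ-linear map φ : A → A is an algebra automorphism of A if and only if there exist x, r, s, t ∈ ℂ with x ≠ 0 and r ≠ 0 such that φ(e₁) = x e₁ + t e₄, φ(e₂) = x² e₂, φ(e₃) = r e₃ + s e₄, and φ(e₄) = x²r e₄. -/
import Mathlib


/-- The multiplication of the 4-dimensional commutative algebra with
`e₁e₁ = e₂`, `e₂e₃ = e₃e₂ = e₄` (all other products of basis vectors zero),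
on the carrier `Fin 4 → ℂ`. -/
def mulC (u v : Fin 4 → ℂ) : Fin 4 → ℂ :=
  ![0, u 0 * v 0, 0, u 1 * v 2 + u 2 * v 1]

/-- Computation of `φ` on a general vector from its values on the basis. -/
lemma stmt14_action (φ : (Fin 4 → ℂ) →ₗ[ℂ] (Fin 4 → ℂ)) (x r s t : ℂ)
    (h0 : φ ![1, 0, 0, 0] = ![x, 0, 0, t])
    (h1 : φ ![0, 1, 0, 0] = ![0, x ^ 2, 0, 0])
    (h2 : φ ![0, 0, 1, 0] = ![0, 0, r, s])
    (h3 : φ ![0, 0, 0, 1] = ![0, 0, 0, x ^ 2 * r]) (w : Fin 4 → ℂ) :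
    φ w = ![x * w 0, x ^ 2 * w 1, r * w 2, t * w 0 + s * w 2 + x ^ 2 * r * w 3] := by
  have hw : w = w 0 • ![(1:ℂ),0,0,0] + w 1 • ![0,1,0,0] + w 2 • ![0,0,1,0] + w 3 • ![0,0,0,1] := by
    funext i; fin_cases i <;> simp
  conv_lhs => rw [hw]
  simp only [map_add, map_smul, h0, h1, h2, h3]
  funext i; fin_cases i <;> (simp; ring)

/-- A linear map `φ` of the algebra `e₁e₁ = e₂, e₂e₃ = e₄` is an algebra automorphism iff
`φ(e₁) = x e₁ + t e₄`, `φ(e₂) = x² e₂`, `φ(e₃) = r e₃ + s e₄`, `φ(e₄) = x²r e₄` for some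
`x, r, s, t ∈ ℂ` with `x ≠ 0` and `r ≠ 0`. -/
theorem stmt14 (φ : (Fin 4 → ℂ) →ₗ[ℂ] (Fin 4 → ℂ)) :
    (Function.Bijective φ ∧ ∀ u v : Fin 4 → ℂ, φ (mulC u v) = mulC (φ u) (φ v)) ↔
    (∃ x r s t : ℂ, x ≠ 0 ∧ r ≠ 0 ∧
      φ ![1, 0, 0, 0] = ![x, 0, 0, t] ∧
      φ ![0, 1, 0, 0] = ![0, x ^ 2, 0, 0] ∧
      φ ![0, 0, 1, 0] = ![0, 0, r, s] ∧
      φ ![0, 0, 0, 1] = ![0, 0, 0, x ^ 2 * r]) := by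
  constructor
  · rintro ⟨hbij, hmul⟩
    have m00 : mulC ![1,0,0,0] ![1,0,0,0] = ![(0:ℂ),1,0,0] := by
      funext i; fin_cases i <;> simp [mulC]
    have m12 : mulC ![0,1,0,0] ![0,0,1,0] = ![(0:ℂ),0,0,1] := by
      funext i; fin_cases i <;> simp [mulC]
    have m01 : mulC ![1,0,0,0] ![0,1,0,0] = (0 : Fin 4 → ℂ) := by
      funext i; fin_cases i <;> simp [mulC]
    have m02 : mulC ![1,0,0,0] ![0,0,1,0] = (0 : Fin 4 → ℂ) := by
      funext i; fin_cases i <;> simp [mulC]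
    have m22 : mulC ![0,0,1,0] ![0,0,1,0] = (0 : Fin 4 → ℂ) := by
      funext i; fin_cases i <;> simp [mulC]
    have H1 := hmul ![1,0,0,0] ![1,0,0,0]; rw [m00] at H1
    have H2 := hmul ![0,1,0,0] ![0,0,1,0]; rw [m12] at H2
    have H3 := hmul ![1,0,0,0] ![0,1,0,0]; rw [m01, map_zero] at H3
    have H4 := hmul ![1,0,0,0] ![0,0,1,0]; rw [m02, map_zero] at H4
    have H5 := hmul ![0,0,1,0] ![0,0,1,0]; rw [m22, map_zero] at H5
    -- components of φ e₂
    have B0 := congrFun H1 0; have B1 := congrFun H1 1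
    have B2 := congrFun H1 2; have B3 := congrFun H1 3
    simp [mulC] at B0 B1 B2 B3
    -- components of φ e₄
    have D0 := congrFun H2 0; have D1 := congrFun H2 1
    have D2 := congrFun H2 2; have D3 := congrFun H2 3
    simp [mulC, B0, B1, B2] at D0 D1 D2 D3
    -- other relations
    have E3 := congrFun H3.symm 3; simp [mulC, B1, B2] at E3
    have F1 := congrFun H4.symm 1; have F3 := congrFun H4.symm 3
    simp [mulC] at F1 F3
    have G3 := congrFun H5.symm 3; simp [mulC] at G3
    -- φ e₄ as a vector
    have hD : φ ![0,0,0,1] = ![0, 0, 0, φ ![1,0,0,0] 0 * φ ![1,0,0,0] 0 * φ ![0,0,1,0] 2] := by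
      funext i; fin_cases i <;> simp [D0, D1, D2, D3]
    -- φ e₄ ≠ 0 by injectivity
    have hne3 : φ ![0,0,0,1] ≠ 0 := by
      intro h
      have h0 : (![0,0,0,1] : Fin 4 → ℂ) = 0 := hbij.injective (by rw [h, map_zero])
      have := congrFun h0 3
      simp at this
    have hxr : φ ![1,0,0,0] 0 * φ ![1,0,0,0] 0 * φ ![0,0,1,0] 2 ≠ 0 := by
      intro h
      exact hne3 (by rw [hD, h]; funext i; fin_cases i <;> simp)
    have hx : φ ![1,0,0,0] 0 ≠ 0 := fun h => hxr (by rw [h]; ring)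
    have hr : φ ![0,0,1,0] 2 ≠ 0 := fun h => hxr (by rw [h]; ring)
    have hA2 : φ ![1,0,0,0] 2 = 0 := E3.resolve_right hx
    have hA1 : φ ![1,0,0,0] 1 = 0 := by
      rw [hA2] at F3
      simp at F3
      exact F3.resolve_right hr
    have hC0 : φ ![0,0,1,0] 0 = 0 := F1.resolve_left hx
    have hC1 : φ ![0,0,1,0] 1 = 0 := by
      have h2 : φ ![0,0,1,0] 1 * φ ![0,0,1,0] 2 = 0 := by linear_combination G3 / 2
      exact (mul_eq_zero.mp h2).resolve_right hr
    refine ⟨φ ![1,0,0,0] 0, φ ![0,0,1,0] 2, φ ![0,0,1,0] 3, φ ![1,0,0,0] 3, hx, hr, ?_, ?_, ?_, ?_⟩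
    · funext i; fin_cases i <;> simp [hA1, hA2]
    · funext i; fin_cases i <;> simp [B0, B1, B2, B3, hA1] <;> ring
    · funext i; fin_cases i <;> simp [hC0, hC1]
    · rw [hD]; funext i; fin_cases i <;> simp [pow_two]
  · rintro ⟨x, r, s, t, hx, hr, h0, h1, h2, h3⟩
    have key := stmt14_action φ x r s t h0 h1 h2 h3
    constructor
    · have hinj : Function.Injective φ := by
        rw [injective_iff_map_eq_zero]
        intro w hw
        rw [key] at hw
        have c0 := congrFun hw 0
        have c1 := congrFun hw 1
        have c2 := congrFun hw 2
        have c3 := congrFun hw 3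
        simp [hx] at c0 c1
        simp [hr] at c2
        rw [c0, c2] at c3
        simp [hx, hr] at c3
        funext i; fin_cases i <;> simp [c0, c1, c2, c3]
      exact ⟨hinj, LinearMap.injective_iff_surjective.mp hinj⟩
    · intro u v
      simp only [key, mulC]
      funext i; fin_cases i <;> simp <;> ring
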